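/- Let n ≥ 6 and 1 ≤ α ≤ n−1 with n dividing 1 + α². Then every vector in the kernel of H_X = [Circ(1+x,n), Circ(1+x^α,n)] over F₂ that is not in the row space of H_Z = [Circ(1+x^α,n)ᵀ, Circ(1+x,n)ᵀ] has Hamming weight at least √n. -/

import Mathlib

set_option maxHeartbeats 1000000


theorem exists_sq (n α : ℕ) (hn : 0 < n) (hdvd : (n:ℤ) ∣ 1 + (α:ℤ)^2) :
    ∃ a b : ℤ, a^2 + b^2 = n ∧ (n:ℤ) ∣ a + α*b ∧ (n:ℤ) ∣ -b + α*a ∧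
      ∀ x y : ℤ, (n:ℤ) ∣ x + α*y → ∃ s t : ℤ, x = s*a - t*b ∧ y = s*b + t*a := by
  set N : ℤ := (n:ℤ) with hN
  have hN0 : (0:ℤ) < N := Int.natCast_pos.mpr hn
  set A : ℤ := (α:ℤ) with hA
  have hnorm : ∀ x y : ℤ, N ∣ x + A*y → N ∣ x^2 + y^2 := by
    intro x y h
    have hJ : N ∣ -y + A*x := by
      have e : -y + A*x = A*(x + A*y) - (1 + A^2)*y := by ring
      rw [e]
      exact dvd_sub (Dvd.dvd.mul_left h A) (Dvd.dvd.mul_right hdvd y)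
    have e : x^2 + y^2 = x*(x + A*y) - y*(-y + A*x) := by ring
    rw [e]
    exact dvd_sub (Dvd.dvd.mul_left h x) (Dvd.dvd.mul_left hJ y)
  -- the set of attained nonzero norms
  set Q : Set ℕ := {m : ℕ | ∃ x y : ℤ, N ∣ x + A*y ∧ ¬(x = 0 ∧ y = 0) ∧ x^2 + y^2 = (m:ℤ)}
    with hQ
  have hQne : (n*n) ∈ Q := by
    refine ⟨N, 0, ⟨1, by ring⟩, ?_, by push_cast; ring⟩
    rintro ⟨h1, -⟩; omega
  have hQne' : ∃ m, m ∈ Q := ⟨_, hQne⟩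
  classical
  obtain ⟨a, b, hab, habne, habm⟩ := Nat.find_spec hQne'
  set m₀ : ℕ := Nat.find hQne' with hm₀
  have hmin : ∀ x y : ℤ, N ∣ x + A*y → ¬(x = 0 ∧ y = 0) → (m₀:ℤ) ≤ x^2 + y^2 := by
    intro x y h hne
    have hxy0 : (0:ℤ) ≤ x^2 + y^2 := by positivity
    have hmem : (x^2+y^2).toNat ∈ Q := ⟨x, y, h, hne, by rw [Int.toNat_of_nonneg hxy0]⟩
    have hle : m₀ ≤ (x^2+y^2).toNat := by rw [hm₀]; exact Nat.find_le hmem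
    calc (m₀:ℤ) ≤ ((x^2+y^2).toNat : ℤ) := by exact_mod_cast hle
      _ = x^2+y^2 := Int.toNat_of_nonneg hxy0
  set M : ℤ := a^2 + b^2 with hM
  have hMm : M = (m₀:ℤ) := habm
  have hM0 : 0 < M := by
    rcases lt_or_ge 0 M with h | h
    · exact h
    · exfalso; apply habne
      constructor <;> nlinarith [sq_nonneg a, sq_nonneg b]
  have hNM : N ∣ M := hnorm a b hab
  have hNleM : N ≤ M := Int.le_of_dvd hM0 hNM
  have hJab : N ∣ -b + A*a := by
    have e : -b + A*a = A*(a + A*b) - (1 + A^2)*b := by ring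
    rw [e]
    exact dvd_sub (Dvd.dvd.mul_left hab A) (Dvd.dvd.mul_right hdvd b)
  -- representation lemma
  have hrep : ∀ x y : ℤ, N ∣ x + A*y → ∃ s t : ℤ, x = s*a - t*b ∧ y = s*b + t*a := by
    intro x y h
    set X : ℤ := x*a + y*b with hX
    set Y : ℤ := -(x*b) + y*a with hY
    set s : ℤ := round ((X:ℚ)/(M:ℚ)) with hs
    set t : ℤ := round ((Y:ℚ)/(M:ℚ)) with ht
    set rx : ℤ := x - (s*a - t*b) with hrx
    set ry : ℤ := y - (s*b + t*a) with hry
    have hMq : (0:ℚ) < (M:ℚ) := by exact_mod_cast hM0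
    have hb1 : |(X:ℚ) - s*M| ≤ M/2 := by
      have h1 : |(X:ℚ)/(M:ℚ) - s| ≤ 1/2 := by
        rw [hs]; exact abs_sub_round _
      have e : (X:ℚ) - s*M = ((X:ℚ)/(M:ℚ) - s) * M := by field_simp
      rw [e, abs_mul, abs_of_pos hMq]
      calc |(X:ℚ)/(M:ℚ) - s| * M ≤ (1/2) * M := by
            apply mul_le_mul_of_nonneg_right h1 (le_of_lt hMq)
        _ = M/2 := by ring
    have hb2 : |(Y:ℚ) - t*M| ≤ M/2 := by
      have h1 : |(Y:ℚ)/(M:ℚ) - t| ≤ 1/2 := by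
        rw [ht]; exact abs_sub_round _
      have e : (Y:ℚ) - t*M = ((Y:ℚ)/(M:ℚ) - t) * M := by field_simp
      rw [e, abs_mul, abs_of_pos hMq]
      calc |(Y:ℚ)/(M:ℚ) - t| * M ≤ (1/2) * M := by
            apply mul_le_mul_of_nonneg_right h1 (le_of_lt hMq)
        _ = M/2 := by ring
    -- key identities
    have id1 : rx*a + ry*b = X - s*M := by rw [hrx, hry, hX, hM]; ring
    have id2 : -(rx*b) + ry*a = Y - t*M := by rw [hrx, hry, hY, hM]; ring
    have idnorm : (rx^2 + ry^2)*M = (X - s*M)^2 + (Y - t*M)^2 := by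
      rw [← id1, ← id2, hM]; ring
    -- bound
    have hnormle : ((rx^2 + ry^2)*M : ℚ) ≤ M*M/2 := by
      have e : ((rx^2 + ry^2)*M : ℚ) = ((X:ℚ) - s*M)^2 + ((Y:ℚ) - t*M)^2 := by
        exact_mod_cast congrArg (Int.cast : ℤ → ℚ) idnorm
      rw [e]
      have a1 := abs_le.mp hb1
      have a2 := abs_le.mp hb2
      have s1 : ((X:ℚ) - s*M)^2 ≤ ((M:ℚ)/2)^2 := sq_le_sq' a1.1 a1.2
      have s2 : ((Y:ℚ) - t*M)^2 ≤ ((M:ℚ)/2)^2 := sq_le_sq' a2.1 a2.2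
      nlinarith
    have hsmall : rx^2 + ry^2 < M := by
      by_contra hc
      push_neg at hc
      have hc' : ((rx:ℚ)^2 + (ry:ℚ)^2) ≥ (M:ℚ) := by exact_mod_cast hc
      nlinarith [hMq, hnormle, hc']
    have hrmem : N ∣ rx + A*ry := by
      have hcomb : N ∣ (s*a - t*b) + A*(s*b + t*a) := by
        have e : (s*a - t*b) + A*(s*b + t*a) = s*(a + A*b) + t*(-b + A*a) := by ring
        rw [e]
        exact dvd_add (Dvd.dvd.mul_left hab s) (Dvd.dvd.mul_left hJab t)
      have e : rx + A*ry = (x + A*y) - ((s*a - t*b) + A*(s*b + t*a)) := by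
        rw [hrx, hry]; ring
      rw [e]; exact dvd_sub h hcomb
    have hzero : rx = 0 ∧ ry = 0 := by
      by_contra hc
      have := hmin rx ry hrmem hc
      rw [← hMm] at this
      omega
    exact ⟨s, t, by omega, by omega⟩
  -- determinant trick : M = N
  obtain ⟨p, q, hp1, hp2⟩ := hrep N 0 ⟨1, by ring⟩
  obtain ⟨s, t, hs1, hs2⟩ := hrep (-A) 1 ⟨0, by ring⟩
  have hdet : M * (p*t - q*s) = N := by
    have e : (p*a - q*b)*(s*b + t*a) - (p*b + q*a)*(s*a - t*b) = (a^2+b^2)*(p*t - q*s) := by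
      ring
    rw [hM, ← e, ← hp1, ← hp2, ← hs1, ← hs2]; ring
  have hMN : M = N := by
    have hk : 1 ≤ p*t - q*s := by
      by_contra hc
      push_neg at hc
      have h0 : M * (p*t - q*s) ≤ 0 :=
        mul_nonpos_of_nonneg_of_nonpos (le_of_lt hM0) (by omega)
      rw [hdet] at h0
      omega
    have h1 : M ≤ M * (p*t - q*s) := le_mul_of_one_le_right (le_of_lt hM0) hk
    linarith
  exact ⟨a, b, by rw [← hMN], hab, hJab, hrep⟩

namespace Stmt18

/-- signed interval sum in `ZMod 2` -/
noncomputable def J (h : ℤ → ZMod 2) (b : ℤ) : ZMod 2 := ∑ t ∈ Finset.Ioc (min 0 b) (max 0 b), h t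

lemma z2 : ∀ x : ZMod 2, x + x = 0 := by decide

lemma sum_Ioc_split (h : ℤ → ZMod 2) {a b c : ℤ} (hab : a ≤ b) (hbc : b ≤ c) :
    (∑ t ∈ Finset.Ioc a b, h t) + (∑ t ∈ Finset.Ioc b c, h t) = ∑ t ∈ Finset.Ioc a c, h t := by
  rw [← Finset.sum_union (Finset.disjoint_left.mpr (by
    intro x hx hy
    rw [Finset.mem_Ioc] at hx hy
    omega))]
  congr 1
  exact Finset.Ioc_union_Ioc_eq_Ioc hab hbc

lemma sum_Ioc_single (h : ℤ → ZMod 2) (b : ℤ) :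
    (∑ t ∈ Finset.Ioc b (b+1), h t) = h (b+1) := by
  have : Finset.Ioc b (b+1) = {b+1} := by
    ext x; rw [Finset.mem_Ioc, Finset.mem_singleton]; omega
  rw [this, Finset.sum_singleton]

lemma J_zero (h : ℤ → ZMod 2) : J h 0 = 0 := by
  simp [J]

lemma J_succ (h : ℤ → ZMod 2) (b : ℤ) : J h (b+1) = J h b + h (b+1) := by
  rcases le_or_gt 0 b with hb | hb
  · have h1 : min 0 b = 0 := min_eq_left hb
    have h2 : min 0 (b+1) = 0 := min_eq_left (by omega)
    have h3 : max 0 b = b := max_eq_right hb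
    have h4 : max 0 (b+1) = b+1 := max_eq_right (by omega)
    rw [J, J, h1, h2, h3, h4, ← sum_Ioc_split h hb (by omega), sum_Ioc_single]
  · have h1 : min 0 b = b := min_eq_right (by omega)
    have h3 : max 0 b = 0 := max_eq_left (by omega)
    have h2 : min 0 (b+1) = b+1 := min_eq_right (by omega)
    have h4 : max 0 (b+1) = 0 := max_eq_left (by omega)
    rw [J, J, h1, h2, h3, h4]
    have hsplit : (∑ t ∈ Finset.Ioc b (b+1), h t) + (∑ t ∈ Finset.Ioc (b+1) 0, h t)
        = ∑ t ∈ Finset.Ioc b 0, h t := sum_Ioc_split h (by omega) (by omega)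
    rw [← hsplit, sum_Ioc_single]
    generalize (∑ t ∈ Finset.Ioc (b+1) 0, h t) = A
    generalize h (b+1) = B
    revert A B; decide

lemma J_add (h g : ℤ → ZMod 2) (b : ℤ) : J (fun t => h t + g t) b = J h b + J g b := by
  rw [J, J, J, Finset.sum_add_distrib]

lemma J_telescope (g : ℤ → ZMod 2) : ∀ i : ℤ, J (fun t => g t + g (t-1)) i = g i + g 0 := by
  have key : ∀ p q r : ZMod 2, (p + q) + (r + p) = r + q := by decide
  intro i
  induction i using Int.induction_on with
  | zero => rw [J_zero, z2]
  | succ k ih =>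
      rw [J_succ, ih]
      have e : ((k:ℤ) + 1) - 1 = (k:ℤ) := by ring
      rw [e]
      exact key (g k) (g 0) (g ((k:ℤ)+1))
  | pred k ih =>
      have hs := J_succ (fun t => g t + g (t-1)) (-(k:ℤ)-1)
      have e : (-(k:ℤ)-1) + 1 = -(k:ℤ) := by ring
      rw [e] at hs
      have e2 : (-(k:ℤ)) - 1 = -(k:ℤ)-1 := by ring
      rw [e2] at hs
      -- hs : J _ (-(k:ℤ)) = J _ (-(k:ℤ)-1) + (g (-(k:ℤ)) + g (-(k:ℤ)-1))
      rw [ih] at hs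
      -- want : J _ (-(k:ℤ)-1) = g (-(k:ℤ)-1) + g 0
      have solve : ∀ A B C D : ZMod 2, B + C = A + (B + D) → A = D + C := by decide
      exact solve _ _ _ _ hs

/-- constancy from unit steps -/
lemma constT (T : ℤ → ℤ → ZMod 2) (h1 : ∀ i j, T (i+1) j = T i j)
    (h2 : ∀ i j, T i (j+1) = T i j) : ∀ i j, T i j = T 0 0 := by
  have hrow : ∀ i j : ℤ, T i j = T 0 j := by
    intro i j
    induction i using Int.induction_on with
    | zero => rfl
    | succ k ih => rw [h1, ih]
    | pred k ih =>
        have := h1 (-(k:ℤ)-1) j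
        have e : (-(k:ℤ)-1) + 1 = -(k:ℤ) := by ring
        rw [e] at this
        rw [← this]; exact ih
  intro i j
  rw [hrow i j]
  induction j using Int.induction_on with
  | zero => rfl
  | succ k ih => rw [h2, ih]
  | pred k ih =>
      have := h2 0 (-(k:ℤ)-1)
      have e : (-(k:ℤ)-1) + 1 = -(k:ℤ) := by ring
      rw [e] at this
      rw [← this]; exact ih


section Surface

variable {n : ℕ} [NeZero n] {α : ℕ}

/-- position map `ℤ² → ZMod n` -/
def phi (n α : ℕ) (i j : ℤ) : ZMod n := ((i + (α:ℤ) * j : ℤ) : ZMod n)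

/-- the discrete potential -/
noncomputable def SF (n α : ℕ) (u w : ZMod n → ZMod 2) (i j : ℤ) : ZMod 2 :=
  J (fun t => u (phi n α 0 t)) j + J (fun t => w (phi n α t j)) i

lemma phi_add (i j x y : ℤ) : phi n α (i+x) (j+y) = phi n α i j + phi n α x y := by
  unfold phi; push_cast; ring

variable (u w : ZMod n → ZMod 2)

lemma stepH (i j : ℤ) :
    SF n α u w (i+1) j = SF n α u w i j + w (phi n α (i+1) j) := by
  unfold SF
  rw [J_succ]
  ring

lemma stepV
    (hrel : ∀ c : ZMod n, w c + w (c - (α:ZMod n)) = u c + u (c - 1)) (i j : ℤ) :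
    SF n α u w i (j+1) = SF n α u w i j + u (phi n α i (j+1)) := by
  have hw : ∀ t : ℤ, w (phi n α t (j+1)) = w (phi n α t j)
      + (u (phi n α t (j+1)) + u (phi n α (t-1) (j+1))) := by
    intro t
    have h1 : phi n α t j = phi n α t (j+1) - (α:ZMod n) := by
      unfold phi; push_cast; ring_nf
    have h2 : phi n α (t-1) (j+1) = phi n α t (j+1) - 1 := by
      unfold phi; push_cast; ring_nf
    have := hrel (phi n α t (j+1))
    rw [h1, h2, ← this]
    exact (by decide : ∀ A B : ZMod 2, A = B + (A + B)) _ _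
  have hJw : J (fun t => w (phi n α t (j+1))) i
      = J (fun t => w (phi n α t j)) i
        + (u (phi n α i (j+1)) + u (phi n α 0 (j+1))) := by
    calc J (fun t => w (phi n α t (j+1))) i
        = J (fun t => w (phi n α t j)
            + (u (phi n α t (j+1)) + u (phi n α (t-1) (j+1)))) i := by
          unfold J; exact Finset.sum_congr rfl (fun t _ => hw t)
      _ = J (fun t => w (phi n α t j)) i
          + J (fun t => u (phi n α t (j+1)) + u (phi n α (t-1) (j+1))) i := J_add _ _ i
      _ = _ := by rw [J_telescope (fun t => u (phi n α t (j+1))) i]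
  unfold SF
  rw [J_succ, hJw]
  have key : ∀ P Q A B : ZMod 2, (P + A) + (Q + (B + A)) = (P + Q) + B := by decide
  exact key _ _ _ _

/-- translation by a lattice vector changes `SF` by a constant -/
lemma Tconst (hrel : ∀ c : ZMod n, w c + w (c - (α:ZMod n)) = u c + u (c - 1))
    {lx ly : ℤ} (hlat : phi n α lx ly = 0) (i j : ℤ) :
    SF n α u w (i+lx) (j+ly) + SF n α u w i j
      = SF n α u w lx ly + SF n α u w 0 0 := by
  have cancel : ∀ A B C : ZMod 2, (A + C) + (B + C) = A + B := by decide
  have h1 : ∀ i j : ℤ, SF n α u w (i+1+lx) (j+ly) + SF n α u w (i+1) j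
      = SF n α u w (i+lx) (j+ly) + SF n α u w i j := by
    intro i j
    have e : i+1+lx = (i+lx)+1 := by ring
    rw [e, stepH u w (i+lx) (j+ly), stepH u w i j]
    have ephi : phi n α (i+lx+1) (j+ly) = phi n α (i+1) j := by
      have e2 : i+lx+1 = (i+1)+lx := by ring
      have e3 : j+ly = j+ly := rfl
      rw [e2, phi_add (i+1) j lx ly, hlat, add_zero]
    rw [ephi]
    exact (by decide : ∀ A B C : ZMod 2, (A + C) + (B + C) = A + B) _ _ _
  have h2 : ∀ i j : ℤ, SF n α u w (i+lx) (j+1+ly) + SF n α u w i (j+1)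
      = SF n α u w (i+lx) (j+ly) + SF n α u w i j := by
    intro i j
    have e : j+1+ly = (j+ly)+1 := by ring
    rw [e, stepV u w hrel (i+lx) (j+ly), stepV u w hrel i j]
    have ephi : phi n α (i+lx) (j+ly+1) = phi n α i (j+1) := by
      have e2 : j+ly+1 = (j+1)+ly := by ring
      rw [e2, phi_add i (j+1) lx ly, hlat, add_zero]
    rw [ephi]
    exact cancel _ _ _
  have := constT (fun i j => SF n α u w (i+lx) (j+ly) + SF n α u w i j) h1 h2 i j
  simpa using this

/-- vertical path sums -/
lemma pathV (hrel : ∀ c : ZMod n, w c + w (c - (α:ZMod n)) = u c + u (c - 1))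
    (i j : ℤ) : ∀ k : ℤ, SF n α u w i (j+k) + SF n α u w i j
      = J (fun t => u (phi n α i (j+t))) k := by
  have cancel2 : ∀ A B C : ZMod 2, A = B + C → A + B = C := by decide
  intro k
  induction k using Int.induction_on with
  | zero => simp [J_zero, z2]
  | succ m ih =>
      have e : j + ((m:ℤ)+1) = (j+(m:ℤ)) + 1 := by ring
      rw [e, stepV u w hrel i (j+(m:ℤ)), J_succ]
      have e2 : j + ((m:ℤ)+1) = j + (m:ℤ) + 1 := by ring
      rw [← ih]
      have key : ∀ A B C : ZMod 2, (A + C) + B = (A + B) + C := by decide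
      rw [← e2]
      exact key _ _ _
  | pred m ih =>
      have hs := stepV u w hrel i (j + (-(m:ℤ)-1))
      have e : j + (-(m:ℤ)-1) + 1 = j + (-(m:ℤ)) := by ring
      rw [e] at hs
      have hJ := J_succ (fun t => u (phi n α i (j+t))) (-(m:ℤ)-1)
      have e2 : (-(m:ℤ)-1) + 1 = -(m:ℤ) := by ring
      rw [e2] at hJ
      -- hs : SF i (j + -m) = SF i (j + (-m-1)) + u (phi i (j + -m))
      -- hJ : J (-m) = J (-m-1) + u (phi i (j + -m))
      -- ih : SF i (j + -m) + SF i j = J (-m)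
      have solve : ∀ S1 S0 Jm Jm1 X : ZMod 2,
          S1 = S0 + Jm → Jm = Jm1 + X → (S0 + X) + S1 = Jm1 →
          True := by intro _ _ _ _ _ _ _ _; trivial
      -- direct: SF i (j+(-m-1)) + SF i j = J (-m-1)
      have goalkey : ∀ Sm Sm1 Sj Jm Jm1 X : ZMod 2,
          Sm = Sm1 + X → Sm + Sj = Jm → Jm = Jm1 + X → Sm1 + Sj = Jm1 := by decide
      exact goalkey _ _ _ _ _ _ hs ih hJ

/-- horizontal path sums -/
lemma pathH (i j : ℤ) : ∀ k : ℤ, SF n α u w (i+k) j + SF n α u w i j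
      = J (fun t => w (phi n α (i+t) j)) k := by
  intro k
  induction k using Int.induction_on with
  | zero => simp [J_zero, z2]
  | succ m ih =>
      have e : i + ((m:ℤ)+1) = (i+(m:ℤ)) + 1 := by ring
      rw [e, stepH u w (i+(m:ℤ)) j, J_succ]
      rw [← ih]
      have key : ∀ A B C : ZMod 2, (A + C) + B = (A + B) + C := by decide
      have e2 : i + ((m:ℤ)+1) = i + (m:ℤ) + 1 := by ring
      rw [← e2]
      exact key _ _ _
  | pred m ih =>
      have hs := stepH (α := α) u w (i + (-(m:ℤ)-1)) j
      have e : i + (-(m:ℤ)-1) + 1 = i + (-(m:ℤ)) := by ring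
      rw [e] at hs
      have hJ := J_succ (fun t => w (phi n α (i+t) j)) (-(m:ℤ)-1)
      have e2 : (-(m:ℤ)-1) + 1 = -(m:ℤ) := by ring
      rw [e2] at hJ
      have goalkey : ∀ Sm Sm1 Sj Jm Jm1 X : ZMod 2,
          Sm = Sm1 + X → Sm + Sj = Jm → Jm = Jm1 + X → Sm1 + Sj = Jm1 := by decide
      exact goalkey _ _ _ _ _ _ hs ih hJ


lemma zmod2_cases : ∀ z : ZMod 2, z = 0 ∨ z = 1 := by decide

lemma cast_ind (z : ZMod 2) : (((if z = 1 then 1 else 0 : ℕ)) : ZMod 2) = z := by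
  rcases zmod2_cases z with rfl | rfl <;> simp

lemma val_intCast (c : ZMod n) : (((c.val : ℕ) : ℤ) : ZMod n) = c := by
  push_cast
  exact ZMod.natCast_rightInverse c

lemma phi_val (c : ZMod n) (x y : ℤ) :
    phi n α ((c.val : ℤ) + x) y = c + phi n α x y := by
  have : ((c.val : ℤ) + x) + (α:ℤ)*y = (c.val : ℤ) + (x + (α:ℤ)*y) := by ring
  unfold phi
  rw [this]
  push_cast
  rw [ZMod.natCast_rightInverse c]

lemma cast_sum_ind (s : Finset ℤ) (f : ℤ → ZMod 2) :
    (((∑ t ∈ s, if f t = 1 then 1 else 0 : ℕ)) : ZMod 2) = ∑ t ∈ s, f t := by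
  rw [Nat.cast_sum]
  exact Finset.sum_congr rfl (fun t _ => cast_ind (f t))

lemma counting (u w : ZMod n → ZMod 2)
    (hrel : ∀ c : ZMod n, w c + w (c - (α:ZMod n)) = u c + u (c - 1))
    {lx ly : ℤ} (hlat : phi n α lx ly = 0)
    (hchi : SF n α u w lx ly + SF n α u w 0 0 = 1) :
    n ≤ ly.natAbs * (∑ c : ZMod n, if u c = 1 then 1 else 0)
        + lx.natAbs * (∑ c : ZMod n, if w c = 1 then 1 else 0) := by
  classical
  have hA1 : ∀ c : ZMod n,
      1 ≤ (∑ t ∈ Finset.Ioc (min 0 ly) (max 0 ly),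
            if u (phi n α (c.val : ℤ) (0+t)) = 1 then (1:ℕ) else 0)
        + (∑ t ∈ Finset.Ioc (min 0 lx) (max 0 lx),
            if w (phi n α ((c.val : ℤ)+t) ly) = 1 then (1:ℕ) else 0) := by
    intro c
    have key1 : SF n α u w ((c.val:ℤ)) (0+ly) + SF n α u w ((c.val:ℤ)) 0
        = J (fun t => u (phi n α ((c.val:ℤ)) (0+t))) ly := pathV u w hrel _ 0 ly
    have key2 : SF n α u w ((c.val:ℤ)+lx) ly + SF n α u w ((c.val:ℤ)) ly
        = J (fun t => w (phi n α ((c.val:ℤ)+t) ly)) lx := pathH u w _ ly lx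
    have key3 : SF n α u w ((c.val:ℤ)+lx) (0+ly) + SF n α u w ((c.val:ℤ)) 0 = 1 := by
      rw [Tconst u w hrel hlat _ 0, hchi]
    rw [zero_add] at key1 key3
    have hsum : J (fun t => u (phi n α ((c.val:ℤ)) (0+t))) ly
        + J (fun t => w (phi n α ((c.val:ℤ)+t) ly)) lx = 1 := by
      rw [← key1, ← key2]
      have solve : ∀ A B C : ZMod 2, C + B = 1 → (A + B) + (C + A) = 1 := by decide
      exact solve _ _ _ key3
    simp only [J] at hsum
    by_contra hc
    push_neg at hc
    have h0 : (∑ t ∈ Finset.Ioc (min 0 ly) (max 0 ly),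
            if u (phi n α (c.val : ℤ) (0+t)) = 1 then (1:ℕ) else 0)
        + (∑ t ∈ Finset.Ioc (min 0 lx) (max 0 lx),
            if w (phi n α ((c.val : ℤ)+t) ly) = 1 then (1:ℕ) else 0) = 0 := by omega
    have hcast := congrArg (fun m : ℕ => (m : ZMod 2)) h0
    simp only [Nat.cast_add, Nat.cast_zero] at hcast
    rw [cast_sum_ind, cast_sum_ind] at hcast
    rw [hsum] at hcast
    exact absurd hcast (by decide)
  have hcard : (∑ _c : ZMod n, (1:ℕ)) = n := by
    rw [Finset.sum_const, smul_eq_mul, mul_one, Finset.card_univ, ZMod.card]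
  have hstep : (n:ℕ) ≤ ∑ c : ZMod n,
      ((∑ t ∈ Finset.Ioc (min 0 ly) (max 0 ly),
            if u (phi n α (c.val : ℤ) (0+t)) = 1 then (1:ℕ) else 0)
        + (∑ t ∈ Finset.Ioc (min 0 lx) (max 0 lx),
            if w (phi n α ((c.val : ℤ)+t) ly) = 1 then (1:ℕ) else 0)) := by
    exact le_trans (le_of_eq hcard.symm)
      (Finset.sum_le_sum (fun c _ => hA1 c))
  rw [Finset.sum_add_distrib] at hstep
  have swap1 : (∑ c : ZMod n, ∑ t ∈ Finset.Ioc (min 0 ly) (max 0 ly),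
        if u (phi n α (c.val : ℤ) (0+t)) = 1 then (1:ℕ) else 0)
      = ly.natAbs * (∑ c : ZMod n, if u c = 1 then 1 else 0) := by
    rw [Finset.sum_comm]
    have hinner : ∀ t : ℤ, (∑ c : ZMod n,
        if u (phi n α (c.val : ℤ) (0+t)) = 1 then (1:ℕ) else 0)
        = ∑ c : ZMod n, if u c = 1 then 1 else 0 := by
      intro t
      have hphi : ∀ c : ZMod n, phi n α (c.val : ℤ) (0+t) = c + phi n α 0 (0+t) := by
        intro c
        have := phi_val (α := α) c 0 (0+t)
        rw [add_zero] at this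
        exact this
      calc (∑ c : ZMod n, if u (phi n α (c.val : ℤ) (0+t)) = 1 then (1:ℕ) else 0)
          = ∑ c : ZMod n, if u (c + phi n α 0 (0+t)) = 1 then (1:ℕ) else 0 :=
            Finset.sum_congr rfl (fun c _ => by rw [hphi c])
        _ = ∑ c : ZMod n, if u c = 1 then (1:ℕ) else 0 :=
            Fintype.sum_equiv (Equiv.addRight (phi n α 0 (0+t))) _ _ (fun c => rfl)
    rw [Finset.sum_congr rfl (fun t _ => hinner t), Finset.sum_const, smul_eq_mul,
      Int.card_Ioc]
    congr 1
    omega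
  have swap2 : (∑ c : ZMod n, ∑ t ∈ Finset.Ioc (min 0 lx) (max 0 lx),
        if w (phi n α ((c.val : ℤ) + t) ly) = 1 then (1:ℕ) else 0)
      = lx.natAbs * (∑ c : ZMod n, if w c = 1 then 1 else 0) := by
    rw [Finset.sum_comm]
    have hinner : ∀ t : ℤ, (∑ c : ZMod n,
        if w (phi n α ((c.val : ℤ) + t) ly) = 1 then (1:ℕ) else 0)
        = ∑ c : ZMod n, if w c = 1 then 1 else 0 := by
      intro t
      calc (∑ c : ZMod n, if w (phi n α ((c.val : ℤ) + t) ly) = 1 then (1:ℕ) else 0)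
          = ∑ c : ZMod n, if w (c + phi n α t ly) = 1 then (1:ℕ) else 0 :=
            Finset.sum_congr rfl (fun c _ => by rw [phi_val c t ly])
        _ = ∑ c : ZMod n, if w c = 1 then (1:ℕ) else 0 :=
            Fintype.sum_equiv (Equiv.addRight (phi n α t ly)) _ _ (fun c => rfl)
    rw [Finset.sum_congr rfl (fun t _ => hinner t), Finset.sum_const, smul_eq_mul,
      Int.card_Ioc]
    congr 1
    omega
  rw [swap1, swap2] at hstep
  exact hstep


lemma Sinv (u w : ZMod n → ZMod 2)
    (hrel : ∀ c : ZMod n, w c + w (c - (α:ZMod n)) = u c + u (c - 1))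
    {ax ay : ℤ} (hlat : phi n α ax ay = 0)
    (hz : SF n α u w ax ay + SF n α u w 0 0 = 0) :
    ∀ i j, SF n α u w (i+ax) (j+ay) = SF n α u w i j := by
  intro i j
  have h := Tconst u w hrel hlat i j
  rw [hz] at h
  exact (by decide : ∀ A B : ZMod 2, A + B = 0 → A = B) _ _ h

lemma SinvMul (u w : ZMod n → ZMod 2) {ax ay : ℤ}
    (h : ∀ i j, SF n α u w (i+ax) (j+ay) = SF n α u w i j) :
    ∀ (k i j : ℤ), SF n α u w (i+k*ax) (j+k*ay) = SF n α u w i j := by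
  intro k
  induction k using Int.induction_on with
  | zero => intro i j; simp
  | succ m ih =>
      intro i j
      have e1 : i + ((m:ℤ)+1)*ax = (i + (m:ℤ)*ax) + ax := by ring
      have e2 : j + ((m:ℤ)+1)*ay = (j + (m:ℤ)*ay) + ay := by ring
      rw [e1, e2, h, ih]
  | pred m ih =>
      intro i j
      have e1 : i + (-(m:ℤ))*ax = (i + (-(m:ℤ)-1)*ax) + ax := by ring
      have e2 : j + (-(m:ℤ))*ay = (j + (-(m:ℤ)-1)*ay) + ay := by ring
      have h2 := h (i + (-(m:ℤ)-1)*ax) (j + (-(m:ℤ)-1)*ay)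
      rw [← e1, ← e2] at h2
      rw [← h2]
      exact ih i j

lemma sum_circ {β : ℕ} (hβn : β < n) (y : ZMod n → ZMod 2) (k : ZMod n) :
    ∑ j : ZMod n, (1 + Polynomial.X^β : Polynomial (ZMod 2)).coeff ((k - j).val) * y j
      = y k + y (k - (β : ZMod n)) := by
  classical
  have hco : ∀ m : ℕ, (1 + Polynomial.X^β : Polynomial (ZMod 2)).coeff m
      = (if m = 0 then 1 else 0) + (if m = β then 1 else 0) := by
    intro m
    rw [Polynomial.coeff_add, Polynomial.coeff_one, Polynomial.coeff_X_pow]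
  have e1 : ∀ j : ZMod n, ((k - j).val = 0) ↔ (j = k) := by
    intro j; rw [ZMod.val_eq_zero, sub_eq_zero, eq_comm]
  have e2 : ∀ j : ZMod n, ((k - j).val = β) ↔ (j = k - (β:ZMod n)) := by
    intro j
    constructor
    · intro h
      have h' : (k - j : ZMod n) = (β : ZMod n) := by
        have hc := congrArg (fun m : ℕ => (m : ZMod n)) h
        simpa [ZMod.natCast_rightInverse (k - j)] using hc
      have e : j = k - (k - j) := by ring
      rw [e, h']
    · intro h
      rw [h]
      have e : k - (k - (β:ZMod n)) = (β:ZMod n) := by ring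
      rw [e, ZMod.val_cast_of_lt hβn]
  calc ∑ j : ZMod n, (1 + Polynomial.X^β : Polynomial (ZMod 2)).coeff ((k - j).val) * y j
      = ∑ j : ZMod n, ((if j = k then y j else 0) + (if j = k - (β:ZMod n) then y j else 0)) := by
        refine Finset.sum_congr rfl (fun j _ => ?_)
        rw [hco, if_congr (e1 j) rfl rfl, if_congr (e2 j) rfl rfl]
        by_cases h1 : j = k <;> by_cases h2 : j = k - (β:ZMod n) <;>
          simp [h1, h2, add_mul]
    _ = y k + y (k - (β : ZMod n)) := by
        rw [Finset.sum_add_distrib]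
        simp

end Surface

end Stmt18



open Polynomial

/-- The `n × n` circulant matrix over `𝔽₂` of a polynomial `A`. -/
def Circ (n : ℕ) (A : Polynomial (ZMod 2)) : Matrix (ZMod n) (ZMod n) (ZMod 2) :=
  Matrix.of fun j k => A.coeff ((j - k).val)

/-- for `n ≥ 6`, `1 ≤ α ≤ n−1` with `n ∣ 1 + α²`, every vector in the
kernel of `H_X = [Circ(1+x), Circ(1+x^α)]` not in the row space of
`H_Z = [Circ(1+x^α)ᵀ, Circ(1+x)ᵀ]` has Hamming weight at least `√n`. -/
theorem stmt_18 (n : ℕ) [NeZero n] (α : ℕ) (hn : 6 ≤ n) (hα1 : 1 ≤ α) (hα2 : α ≤ n - 1)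
    (hdvd : n ∣ 1 + α ^ 2)
    (v : ZMod n ⊕ ZMod n → ZMod 2)
    (hker : (Matrix.fromCols (Circ n (1 + X)) (Circ n (1 + X ^ α))).mulVec v = 0)
    (hrow : ¬ ∃ y : ZMod n → ZMod 2,
      Matrix.vecMul y
        (Matrix.fromCols (Circ n (1 + X ^ α)).transpose (Circ n (1 + X)).transpose) = v) :
    Real.sqrt (n : ℝ) ≤ (hammingNorm v : ℝ) := by
  classical
  set u : ZMod n → ZMod 2 := fun c => v (Sum.inl c) with hu
  set w : ZMod n → ZMod 2 := fun c => v (Sum.inr c) with hw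
  have hαn : α < n := by omega
  have hn0 : 0 < n := by omega
  have hvelim : v = Sum.elim u w := by funext x; cases x <;> rfl
  have hker' : ∀ k : ZMod n,
      (u k + u (k - 1)) + (w k + w (k - (α : ZMod n))) = 0 := by
    intro k
    have h0 := congrFun hker k
    rw [hvelim, Matrix.fromCols_mulVec_sumElim] at h0
    have e1 : (Circ n (1 + X)).mulVec u k = u k + u (k - (1:ZMod n)) := by
      have e : (Circ n (1 + X)).mulVec u k
          = ∑ j : ZMod n, (1 + X^1 : Polynomial (ZMod 2)).coeff ((k - j).val) * u j := by
        simp [Matrix.mulVec, dotProduct, Circ, pow_one]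
      rw [e, Stmt18.sum_circ (by omega : 1 < n) u k, Nat.cast_one]
    have e2 : (Circ n (1 + X^α)).mulVec w k = w k + w (k - (α:ZMod n)) := by
      have e : (Circ n (1 + X^α)).mulVec w k
          = ∑ j : ZMod n, (1 + X^α : Polynomial (ZMod 2)).coeff ((k - j).val) * w j := by
        simp [Matrix.mulVec, dotProduct, Circ]
      rw [e, Stmt18.sum_circ hαn w k]
    rw [Pi.add_apply, e1, e2] at h0
    simpa using h0
  have hrel : ∀ c : ZMod n, w c + w (c - (α:ZMod n)) = u c + u (c - 1) := by
    intro c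
    exact (by decide : ∀ A B C D : ZMod 2, (A+B)+(C+D) = 0 → C+D = A+B) _ _ _ _ (hker' c)
  have hdvd' : (n:ℤ) ∣ 1 + (α:ℤ)^2 := by exact_mod_cast Int.natCast_dvd_natCast.mpr hdvd
  obtain ⟨a, b, hab, hva, hvb, hrep⟩ := exists_sq n α hn0 hdvd'
  have hlat1 : Stmt18.phi n α a b = 0 :=
    (ZMod.intCast_zmod_eq_zero_iff_dvd _ n).mpr hva
  have hlat2 : Stmt18.phi n α (-b) a = 0 :=
    (ZMod.intCast_zmod_eq_zero_iff_dvd _ n).mpr hvb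
  set q : ℕ := ∑ c : ZMod n, if u c = 1 then 1 else 0 with hq
  set r : ℕ := ∑ c : ZMod n, if w c = 1 then 1 else 0 with hr
  have hham : hammingNorm v = q + r := by
    rw [hammingNorm, Finset.card_filter, Fintype.sum_sum_type]
    congr 1
    · exact Finset.sum_congr rfl (fun c _ => by
        rcases Stmt18.zmod2_cases (u c) with h | h <;> simp [hvelim, h])
    · exact Finset.sum_congr rfl (fun c _ => by
        rcases Stmt18.zmod2_cases (w c) with h | h <;> simp [hvelim, h])
  by_cases hchi : Stmt18.SF n α u w a b + Stmt18.SF n α u w 0 0 = 0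
      ∧ Stmt18.SF n α u w (-b) a + Stmt18.SF n α u w 0 0 = 0
  · exfalso
    apply hrow
    have inv1 := Stmt18.Sinv u w hrel hlat1 hchi.1
    have inv2 := Stmt18.Sinv u w hrel hlat2 hchi.2
    have hSinv : ∀ x y : ℤ, Stmt18.phi n α x y = 0 →
        ∀ i j, Stmt18.SF n α u w (i+x) (j+y) = Stmt18.SF n α u w i j := by
      intro x y h0 i j
      obtain ⟨s, t, hx, hy⟩ := hrep x y ((ZMod.intCast_zmod_eq_zero_iff_dvd _ n).mp h0)
      have e1 : i + x = (i + s*a) + t*(-b) := by rw [hx]; ring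
      have e2 : j + y = (j + s*b) + t*a := by rw [hy]; ring
      rw [e1, e2, Stmt18.SinvMul u w inv2 t, Stmt18.SinvMul u w inv1 s]
    set y0 : ZMod n → ZMod 2 := fun k => Stmt18.SF n α u w ((k.val : ℤ)) 0 with hy0
    have phiself : ∀ k : ZMod n, Stmt18.phi n α ((k.val:ℤ)) 0 = k := by
      intro k
      show (((k.val:ℤ) + (α:ℤ)*0 : ℤ) : ZMod n) = k
      push_cast
      rw [ZMod.natCast_rightInverse k]
      ring
    have w_rec : ∀ k : ZMod n, w k = y0 k + y0 (k - 1) := by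
      intro k
      have hstep := Stmt18.stepH (α := α) u w ((k.val:ℤ) - 1) 0
      have e : (k.val:ℤ) - 1 + 1 = (k.val:ℤ) := by ring
      rw [e, phiself k] at hstep
      have hprev : Stmt18.SF n α u w ((k.val:ℤ) - 1) 0 = y0 (k - 1) := by
        have h0 : Stmt18.phi n α ((k.val:ℤ) - 1 - (((k-1).val:ℤ))) 0 = 0 := by
          show ((((k.val:ℤ) - 1 - (((k-1).val:ℤ))) + (α:ℤ)*0 : ℤ) : ZMod n) = 0
          push_cast
          rw [ZMod.natCast_rightInverse k, ZMod.natCast_rightInverse (k-1)]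
          ring
        have hi := hSinv _ _ h0 (((k-1).val:ℤ)) 0
        have e2 : ((k-1).val:ℤ) + ((k.val:ℤ) - 1 - ((k-1).val:ℤ)) = (k.val:ℤ) - 1 := by ring
        rw [e2, zero_add] at hi
        exact hi
      rw [hprev] at hstep
      exact (by decide : ∀ A B C : ZMod 2, A = B + C → C = A + B) _ _ _ hstep
    have u_rec : ∀ k : ZMod n, u k = y0 k + y0 (k - (α:ZMod n)) := by
      intro k
      have hstep := Stmt18.stepV u w hrel (((k - (α:ZMod n)).val:ℤ)) 0
      rw [zero_add] at hstep
      have hphi : Stmt18.phi n α (((k - (α:ZMod n)).val:ℤ)) 1 = k := by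
        show ((((k - (α:ZMod n)).val:ℤ) + (α:ℤ)*1 : ℤ) : ZMod n) = k
        push_cast
        rw [ZMod.natCast_rightInverse (k - (α:ZMod n))]
        ring
      rw [hphi] at hstep
      have htop : Stmt18.SF n α u w (((k - (α:ZMod n)).val:ℤ)) 1 = y0 k := by
        have h0 : Stmt18.phi n α ((((k - (α:ZMod n)).val:ℤ)) - ((k.val:ℤ))) 1 = 0 := by
          show (((((k - (α:ZMod n)).val:ℤ) - ((k.val:ℤ))) + (α:ℤ)*1 : ℤ) : ZMod n) = 0
          push_cast
          rw [ZMod.natCast_rightInverse (k - (α:ZMod n)), ZMod.natCast_rightInverse k]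
          ring
        have hi := hSinv _ _ h0 ((k.val:ℤ)) 0
        have e2 : (k.val:ℤ) + ((((k - (α:ZMod n)).val:ℤ)) - (k.val:ℤ))
            = (((k - (α:ZMod n)).val:ℤ)) := by ring
        rw [e2, zero_add] at hi
        exact hi
      rw [htop] at hstep
      exact (by decide : ∀ A B C : ZMod 2, A = B + C → C = A + B) _ _ _ hstep
    refine ⟨y0, ?_⟩
    rw [hvelim]
    funext x
    cases x with
    | inl k =>
        have e : Matrix.vecMul y0 (Matrix.fromCols (Circ n (1 + X ^ α)).transpose
              (Circ n (1 + X)).transpose) (Sum.inl k)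
            = ∑ j : ZMod n, (1 + X^α : Polynomial (ZMod 2)).coeff ((k - j).val) * y0 j := by
          simp only [Matrix.vecMul, dotProduct, Matrix.fromCols_apply_inl,
            Matrix.transpose_apply, Circ, Matrix.of_apply]
          exact Finset.sum_congr rfl (fun j _ => mul_comm _ _)
        rw [e, Stmt18.sum_circ hαn y0 k]
        exact (u_rec k).symm
    | inr k =>
        have e : Matrix.vecMul y0 (Matrix.fromCols (Circ n (1 + X ^ α)).transpose
              (Circ n (1 + X)).transpose) (Sum.inr k)
            = ∑ j : ZMod n, (1 + X^1 : Polynomial (ZMod 2)).coeff ((k - j).val) * y0 j := by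
          simp only [Matrix.vecMul, dotProduct, Matrix.fromCols_apply_inr,
            Matrix.transpose_apply, Circ, Matrix.of_apply, pow_one]
          exact Finset.sum_congr rfl (fun j _ => mul_comm _ _)
        rw [e, Stmt18.sum_circ (by omega : 1 < n) y0 k, Nat.cast_one]
        exact (w_rec k).symm
  · -- there is a lattice vector with unit period
    have hone : ∃ lx ly : ℤ, Stmt18.phi n α lx ly = 0 ∧
        Stmt18.SF n α u w lx ly + Stmt18.SF n α u w 0 0 = 1 ∧
        ((lx.natAbs = a.natAbs ∧ ly.natAbs = b.natAbs) ∨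
          (lx.natAbs = b.natAbs ∧ ly.natAbs = a.natAbs)) := by
      rcases not_and_or.mp hchi with h | h
      · refine ⟨a, b, hlat1, ?_, Or.inl ⟨rfl, rfl⟩⟩
        rcases Stmt18.zmod2_cases (Stmt18.SF n α u w a b + Stmt18.SF n α u w 0 0) with h0 | h0
        · exact absurd h0 h
        · exact h0
      · refine ⟨-b, a, hlat2, ?_, Or.inr ⟨by rw [Int.natAbs_neg], rfl⟩⟩
        rcases Stmt18.zmod2_cases (Stmt18.SF n α u w (-b) a + Stmt18.SF n α u w 0 0) with h0 | h0
        · exact absurd h0 h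
        · exact h0
    obtain ⟨lx, ly, hlat, hchi1, hor⟩ := hone
    have hcount := Stmt18.counting u w hrel hlat hchi1
    rw [← hq, ← hr] at hcount
    set m : ℕ := max a.natAbs b.natAbs with hm
    have hlxm : lx.natAbs ≤ m := by rcases hor with ⟨h1, h2⟩ | ⟨h1, h2⟩ <;> omega
    have hlym : ly.natAbs ≤ m := by rcases hor with ⟨h1, h2⟩ | ⟨h1, h2⟩ <;> omega
    have habn : a.natAbs^2 + b.natAbs^2 = n := by
      have hZ : ((a.natAbs:ℤ))^2 + ((b.natAbs:ℤ))^2 = (n:ℤ) := by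
        rw [← Int.abs_eq_natAbs, ← Int.abs_eq_natAbs, sq_abs, sq_abs, hab]
      exact_mod_cast hZ
    have hm2n : m*m ≤ n := by
      rcases max_cases a.natAbs b.natAbs with ⟨he, _⟩ | ⟨he, _⟩ <;> rw [hm, he] <;> nlinarith
    set s : ℕ := q + r with hs
    have hms : n ≤ m * s := by
      calc n ≤ ly.natAbs * q + lx.natAbs * r := hcount
        _ ≤ m * q + m * r := Nat.add_le_add (Nat.mul_le_mul_right q hlym)
            (Nat.mul_le_mul_right r hlxm)
        _ = m * s := by rw [hs]; ring
    have hfinal : n ≤ s * s := by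
      have h1 : n*n ≤ (m*s)*(m*s) := Nat.mul_le_mul hms hms
      have h2 : (m*s)*(m*s) = (m*m)*(s*s) := by ring
      have h3 : (m*m)*(s*s) ≤ n*(s*s) := Nat.mul_le_mul_right _ hm2n
      have h4 : n*n ≤ n*(s*s) := by omega
      exact Nat.le_of_mul_le_mul_left h4 hn0
    have hfin : (n:ℝ) ≤ ((s:ℕ):ℝ)^2 := by
      have : (n:ℝ) ≤ ((s*s : ℕ):ℝ) := by exact_mod_cast hfinal
      rw [sq]
      push_cast at this ⊢
      exact this
    rw [hham]
    calc Real.sqrt n ≤ Real.sqrt (((s:ℕ):ℝ)^2) := Real.sqrt_le_sqrt hfin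
      _ = ((s:ℕ):ℝ) := Real.sqrt_sq (by positivity)
      _ = ((q + r : ℕ):ℝ) := by rw [hs]
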